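/- If w and w' are words in S_n that are conjugate (i.e., w = xy and w' = yx for some words x, y), then N(w) = N(w'), where N(w) = Σ_{1≤k≤n-1} k(n-k)·γ_{k,k+1}(w) − Σ_{1≤i<j≤n} γ_{ij}(w). -/

import Mathlib

/-- `gamma w i j = 1` if `j` appears before `i` in the word `w`, else `0`. -/
def gamma (w : List ℕ) (i j : ℕ) : ℤ := if w.idxOf j < w.idxOf i then 1 else 0

/-- `N(w) = Σ_{1≤k≤n-1} k(n-k)·γ_{k,k+1}(w) − Σ_{1≤i<j≤n} γ_{ij}(w)`. -/
def wordN (n : ℕ) (w : List ℕ) : ℤ :=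
  (∑ k ∈ Finset.Icc 1 (n - 1), (k : ℤ) * ((n : ℤ) - (k : ℤ)) * gamma w k (k + 1))
  - ∑ i ∈ Finset.Icc 1 n, ∑ j ∈ Finset.Icc 1 n, if i < j then gamma w i j else 0

open Finset List

lemma gamma_diff {a : ℕ} {t : List ℕ} (ha : a ∉ t) {i j : ℕ}
    (hi : i ∈ a :: t) (hj : j ∈ a :: t) (hij : i ≠ j) :
    gamma (a :: t) i j - gamma (t ++ [a]) i j
      = (if j = a then 1 else 0) - (if i = a then 1 else 0) := by
  unfold gamma
  by_cases hja : j = a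
  · subst hja
    have hia : i ≠ j := hij
    have hit : i ∈ t := (List.mem_cons.1 hi).resolve_left hia
    rw [idxOf_cons_self, idxOf_cons_ne _ (Ne.symm hia),
        idxOf_append_of_mem hit, idxOf_append_of_notMem ha]
    have h1 : t.idxOf i < t.length := idxOf_lt_length_iff.2 hit
    simp only [idxOf_cons_self, List.length, idxOf_nil]
    have : ¬ (t.length + 0 < t.idxOf i) := by omega
    simp only [hia, if_false, if_pos (Nat.succ_pos _)]
    split <;> simp_all <;> omega
  · by_cases hia : i = a
    · subst hia
      have hjt : j ∈ t := (List.mem_cons.1 hj).resolve_left hja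
      rw [idxOf_cons_self, idxOf_cons_ne _ (Ne.symm hja),
          idxOf_append_of_mem hjt, idxOf_append_of_notMem ha]
      have h1 : t.idxOf j < t.length := idxOf_lt_length_iff.2 hjt
      simp only [idxOf_nil]
      have h2 : ¬ (Nat.succ (t.idxOf j) < 0) := by omega
      have h3 : t.idxOf j < t.length + 0 := by omega
      simp only [hja, if_false]
      split <;> split <;> simp_all <;> omega
    · have hit : i ∈ t := (List.mem_cons.1 hi).resolve_left hia
      have hjt : j ∈ t := (List.mem_cons.1 hj).resolve_left hja
      rw [idxOf_cons_ne _ (Ne.symm hia), idxOf_cons_ne _ (Ne.symm hja),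
          idxOf_append_of_mem hit, idxOf_append_of_mem hjt]
      simp [hia, hja, Nat.succ_lt_succ_iff]

lemma wordN_rot (n a : ℕ) (t : List ℕ) (h : (a :: t).Perm (List.range' 1 n)) :
    wordN n (a :: t) = wordN n (t ++ [a]) := by
  have hnd : (a :: t).Nodup := h.nodup_iff.2 List.nodup_range'
  have ha : a ∉ t := (List.nodup_cons.1 hnd).1
  have hmem : ∀ m, m ∈ Finset.Icc 1 n → m ∈ a :: t := by
    intro m hm
    rw [Finset.mem_Icc] at hm
    exact h.mem_iff.2 (by simp [List.mem_range'_1]; omega)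
  have han : 1 ≤ a ∧ a ≤ n := by
    have := h.mem_iff.1 (List.mem_cons_self : a ∈ a :: t)
    simp [List.mem_range'_1] at this; omega
  have key : wordN n (a :: t) - wordN n (t ++ [a]) = 0 := by
    have e1 : (∑ k ∈ Finset.Icc 1 (n - 1), (k : ℤ) * ((n : ℤ) - (k : ℤ)) * gamma (a :: t) k (k + 1))
        - (∑ k ∈ Finset.Icc 1 (n - 1), (k : ℤ) * ((n : ℤ) - (k : ℤ)) * gamma (t ++ [a]) k (k + 1))
        = ∑ k ∈ Finset.Icc 1 (n - 1),
            ((if k = a - 1 then (k : ℤ) * ((n : ℤ) - (k : ℤ)) else 0)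
              - (if k = a then (k : ℤ) * ((n : ℤ) - (k : ℤ)) else 0)) := by
      rw [← Finset.sum_sub_distrib]
      refine Finset.sum_congr rfl ?_
      intro k hk
      have hk' := Finset.mem_Icc.1 hk
      have h1 : k ∈ Finset.Icc 1 n := Finset.mem_Icc.2 (by omega)
      have h2 : k + 1 ∈ Finset.Icc 1 n := Finset.mem_Icc.2 (by omega)
      have := gamma_diff ha (hmem k h1) (hmem (k+1) h2) (by omega)
      rw [← mul_sub, this]
      split_ifs <;> ring_nf <;> omega
    have e2 : (∑ i ∈ Finset.Icc 1 n, ∑ j ∈ Finset.Icc 1 n, if i < j then gamma (a :: t) i j else 0)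
        - (∑ i ∈ Finset.Icc 1 n, ∑ j ∈ Finset.Icc 1 n, if i < j then gamma (t ++ [a]) i j else 0)
        = ∑ i ∈ Finset.Icc 1 n, ∑ j ∈ Finset.Icc 1 n,
            ((if i < a ∧ j = a then (1:ℤ) else 0) - (if i = a ∧ a < j then (1:ℤ) else 0)) := by
      rw [← Finset.sum_sub_distrib]
      refine Finset.sum_congr rfl ?_
      intro i hi
      rw [← Finset.sum_sub_distrib]
      refine Finset.sum_congr rfl ?_
      intro j hj
      by_cases hij : i < j
      · have := gamma_diff ha (hmem i hi) (hmem j hj) (by omega)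
        rw [if_pos hij, if_pos hij, this]
        split_ifs <;> omega
      · rw [if_neg hij, if_neg hij]
        split_ifs <;> omega
    have s1 : ∑ k ∈ Finset.Icc 1 (n-1), (if k = a - 1 then (k : ℤ) * ((n : ℤ) - (k : ℤ)) else 0)
        = if a - 1 ∈ Finset.Icc 1 (n-1) then ((a:ℤ)-1) * ((n:ℤ) - ((a:ℤ)-1)) else 0 := by
      rw [Finset.sum_ite_eq' (Finset.Icc 1 (n-1)) (a-1) (fun k => (k : ℤ) * ((n : ℤ) - (k : ℤ)))]
      split_ifs with hc
      · have : 1 ≤ a - 1 := (Finset.mem_Icc.1 hc).1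
        have : ((a - 1 : ℕ) : ℤ) = (a:ℤ) - 1 := by omega
        rw [this]
      · rfl
    have s2 : ∑ k ∈ Finset.Icc 1 (n-1), (if k = a then (k : ℤ) * ((n : ℤ) - (k : ℤ)) else 0)
        = if a ∈ Finset.Icc 1 (n-1) then (a:ℤ) * ((n:ℤ) - (a:ℤ)) else 0 :=
      Finset.sum_ite_eq' (Finset.Icc 1 (n-1)) a (fun k => (k : ℤ) * ((n : ℤ) - (k : ℤ)))
    have s3 : ∑ i ∈ Finset.Icc 1 n, ∑ j ∈ Finset.Icc 1 n,
        ((if i < a ∧ j = a then (1:ℤ) else 0) - (if i = a ∧ a < j then (1:ℤ) else 0))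
        = ((a:ℤ) - 1) - ((n:ℤ) - (a:ℤ)) := by
      simp only [Finset.sum_sub_distrib]
      have t1 : ∀ i, (∑ j ∈ Finset.Icc 1 n, (if i < a ∧ j = a then (1:ℤ) else 0))
          = if i < a then (1:ℤ) else 0 := by
        intro i
        rw [show (fun j => if i < a ∧ j = a then (1:ℤ) else 0)
              = fun j => if j = a then (if i < a then (1:ℤ) else 0) else 0 from by
            funext j; split_ifs <;> tauto]
        rw [Finset.sum_ite_eq' (Finset.Icc 1 n) a (fun _ => if i < a then (1:ℤ) else 0)]
        rw [if_pos (Finset.mem_Icc.2 (by omega))]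
      have t2 : ∀ i, (∑ j ∈ Finset.Icc 1 n, (if i = a ∧ a < j then (1:ℤ) else 0))
          = if i = a then ((n:ℤ) - (a:ℤ)) else 0 := by
        intro i
        by_cases hia : i = a
        · simp only [hia, true_and, if_true]
          rw [Finset.sum_boole]
          have : (Finset.Icc 1 n).filter (fun j => a < j) = Finset.Icc (a+1) n := by
            ext j; simp only [Finset.mem_filter, Finset.mem_Icc]; omega
          rw [this, Nat.card_Icc]
          have : (n + 1 - (a + 1) : ℕ) = n - a := by omega
          rw [this]
          omega
        · simp [hia]
      rw [Finset.sum_congr rfl (fun i _ => t1 i), Finset.sum_congr rfl (fun i _ => t2 i)]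
      rw [Finset.sum_boole]
      have : (Finset.Icc 1 n).filter (fun i => i < a) = Finset.Icc 1 (a-1) := by
        ext i; simp only [Finset.mem_filter, Finset.mem_Icc]; omega
      rw [this, Nat.card_Icc]
      rw [Finset.sum_ite_eq' (Finset.Icc 1 n) a (fun _ => (n:ℤ) - (a:ℤ))]
      rw [if_pos (Finset.mem_Icc.2 (by omega))]
      omega
    have expand : wordN n (a :: t) - wordN n (t ++ [a])
        = ((∑ k ∈ Finset.Icc 1 (n - 1), (k : ℤ) * ((n : ℤ) - (k : ℤ)) * gamma (a :: t) k (k + 1))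
          - (∑ k ∈ Finset.Icc 1 (n - 1), (k : ℤ) * ((n : ℤ) - (k : ℤ)) * gamma (t ++ [a]) k (k + 1)))
          - ((∑ i ∈ Finset.Icc 1 n, ∑ j ∈ Finset.Icc 1 n, if i < j then gamma (a :: t) i j else 0)
          - (∑ i ∈ Finset.Icc 1 n, ∑ j ∈ Finset.Icc 1 n, if i < j then gamma (t ++ [a]) i j else 0)) := by
      unfold wordN; ring
    rw [expand, e1, e2, Finset.sum_sub_distrib, s1, s2, s3]
    split_ifs with hc1 hc2 hc2
    · rw [Finset.mem_Icc] at hc1 hc2; ring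
    · rw [Finset.mem_Icc] at hc1 hc2
      have hn : a = n := by omega
      subst hn; ring
    · rw [Finset.mem_Icc] at hc1 hc2
      have h1 : a = 1 := by omega
      subst h1; push_cast; ring
    · rw [Finset.mem_Icc] at hc1 hc2
      have h1 : a = 1 := by omega
      have h2 : n = 1 := by omega
      subst h1; subst h2; norm_num
  linarith [key]

theorem N_conjugation_invariant (n : ℕ) (x y : List ℕ)
    (hperm : (x ++ y).Perm (List.range' 1 n)) :
    wordN n (x ++ y) = wordN n (y ++ x) := by
  induction x generalizing y with
  | nil => simp
  | cons a x ih =>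
    have h1 : (a :: (x ++ y)).Perm (List.range' 1 n) := hperm
    have hrot : wordN n (a :: (x ++ y)) = wordN n ((x ++ y) ++ [a]) := wordN_rot n a (x ++ y) h1
    have hperm2 : (x ++ (y ++ [a])).Perm (List.range' 1 n) := by
      refine List.Perm.trans ?_ h1
      calc x ++ (y ++ [a]) = (x ++ y) ++ [a] := by rw [List.append_assoc]
        _ ~ [a] ++ (x ++ y) := List.perm_append_comm
        _ = a :: (x ++ y) := rfl
    calc wordN n ((a :: x) ++ y) = wordN n (a :: (x ++ y)) := rfl
      _ = wordN n ((x ++ y) ++ [a]) := hrot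
      _ = wordN n (x ++ (y ++ [a])) := by rw [List.append_assoc]
      _ = wordN n ((y ++ [a]) ++ x) := ih (y ++ [a]) hperm2
      _ = wordN n (y ++ (a :: x)) := by rw [List.append_assoc]; rfl
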